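/- The function t ↦ η^∞_t is differentiable on (−∞, T] and solves the Riccati equation (d/dt)η^∞_t = 2(a+q)η^∞_t + (η^∞_t)² − (ε − q²) for every t ≤ T, together with the terminal condition η^∞_T = c. -/

import Mathlib

set_option maxHeartbeats 1600000


/-- The explicit solution `η` of the scalar Riccati equation, as a function of the
parameters `a, q, ε, c`, the horizon `T`, the coefficient `r` (which equals `1` for
the mean field limit) and the time `t`. -/
noncomputable def etaAux (a q ε c T r t : ℝ) : ℝ :=
  let R := (a + q) ^ 2 + r * (ε - q ^ 2)
  let dp := -(a + q) + Real.sqrt R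
  let dm := -(a + q) - Real.sqrt R
  let e := Real.exp ((dp - dm) * (T - t))
  (-(ε - q ^ 2) * (e - 1) - c * (dp * e - dm)) / ((dm * e - dp) - c * r * (e - 1))

/-- The function `t ↦ η^∞_t` is differentiable on `(−∞, T]` and solves the Riccati
equation `(d/dt) η^∞_t = 2(a+q) η^∞_t + (η^∞_t)² − (ε − q²)` for every `t ≤ T`,
with terminal condition `η^∞_T = c`. -/
theorem statement_8 (T a q ε c : ℝ) (hT : 0 < T)
    (ha : 0 ≤ a) (hq : 0 ≤ q) (hc : 0 ≤ c) (hε : q ^ 2 ≤ ε)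
    (hR : 0 < (a + q) ^ 2 + (ε - q ^ 2)) :
    DifferentiableOn ℝ (etaAux a q ε c T 1) (Set.Iic T) ∧
    (∀ t ≤ T, HasDerivAt (etaAux a q ε c T 1)
      (2 * (a + q) * etaAux a q ε c T 1 t + (etaAux a q ε c T 1 t) ^ 2 - (ε - q ^ 2)) t) ∧
    etaAux a q ε c T 1 T = c := by
  have hR' : (0:ℝ) < (a + q) ^ 2 + 1 * (ε - q ^ 2) := by linarith
  set s := Real.sqrt ((a + q) ^ 2 + 1 * (ε - q ^ 2)) with hsdef
  have hfun : etaAux a q ε c T 1 = fun u =>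
      (-(ε - q ^ 2) * ((Real.exp (((-(a + q) + s) - (-(a + q) - s)) * (T - u))) - 1)
        - c * ((-(a + q) + s) * (Real.exp (((-(a + q) + s) - (-(a + q) - s)) * (T - u)))
            - (-(a + q) - s))) /
      (((-(a + q) - s) * (Real.exp (((-(a + q) + s) - (-(a + q) - s)) * (T - u)))
          - (-(a + q) + s))
        - c * 1 * ((Real.exp (((-(a + q) + s) - (-(a + q) - s)) * (T - u))) - 1)) := rfl
  have hs : 0 < s := Real.sqrt_pos.mpr hR'
  have hs2 : s ^ 2 = (a + q) ^ 2 + 1 * (ε - q ^ 2) := Real.sq_sqrt hR'.le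
  clear_value s
  have hεs : ε - q ^ 2 = s ^ 2 - (a + q) ^ 2 := by linarith
  set E : ℝ → ℝ := fun u => Real.exp (((-(a + q) + s) - (-(a + q) - s)) * (T - u)) with hE
  have key : ∀ t ≤ T, HasDerivAt (etaAux a q ε c T 1)
      (2 * (a + q) * etaAux a q ε c T 1 t + (etaAux a q ε c T 1 t) ^ 2 - (ε - q ^ 2)) t := by
    intro t ht
    have hE1 : 1 ≤ E t := by
      apply Real.one_le_exp
      have h0 : (0:ℝ) ≤ (-(a + q) + s) - (-(a + q) - s) := by linarith
      exact mul_nonneg h0 (by linarith)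
    have hEt : HasDerivAt E (E t * -((-(a + q) + s) - (-(a + q) - s))) t := by
      have h1 : HasDerivAt (fun u : ℝ => ((-(a + q) + s) - (-(a + q) - s)) * (T - u))
          (-((-(a + q) + s) - (-(a + q) - s))) t := by
        simpa using (((hasDerivAt_id t).const_sub T).const_mul ((-(a + q) + s) - (-(a + q) - s)))
      exact h1.exp
    have hN : HasDerivAt
        (fun u => -(ε - q ^ 2) * (E u - 1) - c * ((-(a + q) + s) * E u - (-(a + q) - s)))
        (-(ε - q ^ 2) * (E t * -((-(a + q) + s) - (-(a + q) - s)))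
          - c * ((-(a + q) + s) * (E t * -((-(a + q) + s) - (-(a + q) - s))))) t :=
      ((hEt.sub_const 1).const_mul _).sub
        (((hEt.const_mul _).sub_const _).const_mul c)
    have hD : HasDerivAt
        (fun u => ((-(a + q) - s) * E u - (-(a + q) + s)) - c * 1 * (E u - 1))
        ((-(a + q) - s) * (E t * -((-(a + q) + s) - (-(a + q) - s)))
          - c * 1 * (E t * -((-(a + q) + s) - (-(a + q) - s)))) t :=
      ((hEt.const_mul _).sub_const _).sub ((hEt.sub_const 1).const_mul (c * 1))
    have hD0 : ((-(a + q) - s) * E t - (-(a + q) + s)) - c * 1 * (E t - 1) ≠ 0 := by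
      have h1 : (-(a + q) - s) * E t ≤ (-(a + q) - s) * 1 := by
        apply mul_le_mul_of_nonpos_left hE1 (by linarith)
      have h2 : 0 ≤ c * 1 * (E t - 1) := by
        have : (0:ℝ) ≤ E t - 1 := by linarith
        positivity
      nlinarith
    have hquot := hN.div hD hD0
    have hval : etaAux a q ε c T 1 t =
        (-(ε - q ^ 2) * (E t - 1) - c * ((-(a + q) + s) * E t - (-(a + q) - s))) /
          (((-(a + q) - s) * E t - (-(a + q) + s)) - c * 1 * (E t - 1)) := by
      rw [hfun]
    rw [hfun] at hval ⊢
    rw [hval]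
    convert hquot using 1
    case e'_4 => rfl
    case e'_5 => rfl
    case e'_8 => rfl
    rw [hεs]
    generalize E t = x at hD0 ⊢
    set N := (-(s ^ 2 - (a + q) ^ 2) * (x - 1) - c * ((-(a + q) + s) * x - (-(a + q) - s))) with hNe
    set D := ((-(a + q) - s) * x - (-(a + q) + s) - c * 1 * (x - 1)) with hDe
    set y := N / D with hy
    have hyD : y * D = N := div_mul_cancel₀ _ hD0
    rw [eq_div_iff (pow_ne_zero 2 hD0)]
    rw [hNe, hDe] at hyD ⊢
    linear_combination (2 * (a + q) * ((-(a + q) - s) * x - (-(a + q) + s) - c * 1 * (x - 1))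
      + y * ((-(a + q) - s) * x - (-(a + q) + s) - c * 1 * (x - 1))
      + (-(s ^ 2 - (a + q) ^ 2) * (x - 1) - c * ((-(a + q) + s) * x - (-(a + q) - s)))) * hyD
  refine ⟨fun t ht => (key t ht).differentiableAt.differentiableWithinAt, key, ?_⟩
  rw [hfun]
  simp only [sub_self, mul_zero, Real.exp_zero]
  have hsne : ((-(a + q) - s) * 1 - (-(a + q) + s)) - c * 1 * (1 - 1) ≠ 0 := by
    intro h; apply hs.ne'; linarith
  rw [show (-(a + q) - s) * 1 - (-(a + q) + s) - (0:ℝ) = -(2*s) by ring,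
    show (0:ℝ) - c * ((-(a + q) + s) * 1 - (-(a + q) - s)) = c * -(2*s) by ring]
  exact mul_div_cancel_right₀ c (by simpa using hs.ne')
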